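/- A presheaf A : Δ_inert^op → Set for which the two face maps d^⊥*, d^⊤* : A_1 → A_0 coincide is the same data as a functor L^op → Set, where L is the category of finite linear orders and convex monotone injections; more precisely, the category of such presheaves is equivalent to the category of functors L^op → Set. -/

import Mathlib

/-! Preliminaries: the active-inert factorization system on the simplex
category, the inert subcategory `Δ_inert`, the one-object category `Bℕ`,
twisted arrow categories, and the explicit free decomposition space formula,
following Hackney–Kock, "Free decomposition spaces". -/

open CategoryTheory SimplexCategory

namespace FreeDecompPaper

/-- A map in the simplex category is *active* if it preserves endpoints:
`f 0 = 0` and `f (last) = last`. -/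
def IsActive {x y : SimplexCategory} (f : x ⟶ y) : Prop :=
  f.toOrderHom 0 = 0 ∧ f.toOrderHom (Fin.last x.len) = Fin.last y.len

/-- A map in the simplex category is *inert* (distance-preserving) if
`f (i+1) = f i + 1` for all `i`. -/
def IsInert {x y : SimplexCategory} (f : x ⟶ y) : Prop :=
  ∀ i : Fin x.len, (f.toOrderHom i.succ : ℕ) = (f.toOrderHom i.castSucc : ℕ) + 1

lemma isInert_id (x : SimplexCategory) : IsInert (𝟙 x) := by intro i; simp

lemma isInert_from_zero {n : ℕ} (f : mk 0 ⟶ mk n) : IsInert f := fun i => i.elim0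

lemma isInert_comp {x y z : SimplexCategory} {f : x ⟶ y} {g : y ⟶ z}
    (hf : IsInert f) (hg : IsInert g) : IsInert (f ≫ g) := by
  intro i
  have key : ∀ a b : Fin (y.len + 1), (b : ℕ) = (a : ℕ) + 1 →
      (g.toOrderHom b : ℕ) = (g.toOrderHom a : ℕ) + 1 := by
    intro a b hab
    have ha : (a : ℕ) < y.len := by have := b.isLt; omega
    have e1 : (⟨(a : ℕ), ha⟩ : Fin y.len).castSucc = a := by ext; simp
    have e2 : (⟨(a : ℕ), ha⟩ : Fin y.len).succ = b := by ext; simp; omega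
    have := hg ⟨(a : ℕ), ha⟩
    rw [e1, e2] at this
    exact this
  simpa using key _ _ (hf i)

lemma isActive_id (x : SimplexCategory) : IsActive (𝟙 x) := by
  constructor <;> simp

lemma isActive_comp {x y z : SimplexCategory} {f : x ⟶ y} {g : y ⟶ z}
    (hf : IsActive f) (hg : IsActive g) : IsActive (f ≫ g) := by
  constructor
  · show g.toOrderHom (f.toOrderHom 0) = 0
    rw [hf.1, hg.1]
  · show g.toOrderHom (f.toOrderHom (Fin.last x.len)) = Fin.last z.len
    rw [hf.2, hg.2]

/-- The inert map `ρᵢ : [1] → [k]` with image `{i, i+1}` (0-indexed vertices;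
in the 1-indexed labelling of the paper its image is `{i-1, i}`). -/
def rho (k : ℕ) (i : Fin k) : mk 1 ⟶ mk k :=
  mkHom ⟨fun j => ⟨(i : ℕ) + (j : ℕ), by have := i.isLt; have := j.isLt; omega⟩,
    fun a b h => by
      simp only [Fin.mk_le_mk]
      have : (a : ℕ) ≤ (b : ℕ) := h
      omega⟩

/-- The vertex map `[0] → [k]` picking out the vertex `j`. -/
def vtx (k : ℕ) (j : Fin (k + 1)) : mk 0 ⟶ mk k :=
  mkHom ⟨fun _ => j, fun _ _ _ => le_refl _⟩

/-- The unique active map `[1] → [k]`. -/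
def mu (k : ℕ) : mk 1 ⟶ mk k :=
  mkHom ⟨fun j => ⟨(j : ℕ) * k, by
      have hj : (j : ℕ) ≤ 1 := by have := j.isLt; omega
      have : (j : ℕ) * k ≤ 1 * k := Nat.mul_le_mul_right k hj
      omega⟩,
    fun a b h => by
      simp only [Fin.mk_le_mk]
      exact Nat.mul_le_mul_right k h⟩

lemma isActive_mu (k : ℕ) : IsActive (mu k) := by
  constructor
  · ext
    show ((0 : Fin 2) : ℕ) * k = ((0 : Fin (k+1)) : ℕ)
    simp
  · ext
    show ((Fin.last 1 : Fin 2) : ℕ) * k = ((Fin.last k : Fin (k+1)) : ℕ)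
    simp [Fin.last]

/-- Iterated bottom coface `(d⊥)^a : [m] → [m+a]`, where `d⊥ = δ 0 : i ↦ i+1`. -/
def dBotPow (m : ℕ) : (a : ℕ) → (mk m ⟶ mk (m + a))
  | 0 => 𝟙 _
  | a + 1 => dBotPow m a ≫ δ (0 : Fin (m + a + 2))

/-- Iterated top coface `(d⊤)^b : [m] → [m+b]`, where `d⊤ = δ (last) : i ↦ i`. -/
def dTopPow (m : ℕ) : (b : ℕ) → (mk m ⟶ mk (m + b))
  | 0 => 𝟙 _
  | b + 1 => dTopPow m b ≫ δ (Fin.last (m + b + 1))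

lemma isInert_dBot (m : ℕ) : IsInert (δ (0 : Fin (m + 2)) : mk m ⟶ mk (m + 1)) := by
  intro i
  show ((0 : Fin (m+2)).succAbove i.succ : ℕ) = ((0 : Fin (m+2)).succAbove i.castSucc : ℕ) + 1
  rw [Fin.succAbove_of_le_castSucc _ _ (by simp [Fin.le_def]),
    Fin.succAbove_of_le_castSucc _ _ (by simp [Fin.le_def])]
  simp

lemma isInert_dTop (m : ℕ) : IsInert (δ (Fin.last (m + 1)) : mk m ⟶ mk (m + 1)) := by
  intro i
  show ((Fin.last (m+1)).succAbove i.succ : ℕ) = ((Fin.last (m+1)).succAbove i.castSucc : ℕ) + 1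
  have hi : (i : ℕ) < m := by have := i.isLt; simpa [SimplexCategory.len_mk] using this
  rw [Fin.succAbove_of_castSucc_lt _ _ (by
      simp only [Fin.lt_def, Fin.coe_castSucc, Fin.val_succ, Fin.val_last]; omega),
    Fin.succAbove_of_castSucc_lt _ _ (by
      simp only [Fin.lt_def, Fin.coe_castSucc, Fin.val_last]; omega)]
  simp

lemma isInert_dBotPow (m a : ℕ) : IsInert (dBotPow m a) := by
  induction a with
  | zero => exact isInert_id _
  | succ a ih => exact isInert_comp ih (isInert_dBot _)

lemma isInert_dTopPow (m b : ℕ) : IsInert (dTopPow m b) := by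
  induction b with
  | zero => exact isInert_id _
  | succ b ih => exact isInert_comp ih (isInert_dTop _)

/-- The subcategory `Δ_inert` of the simplex category: objects are natural
numbers `n` (standing for the ordinal `[n]`), and morphisms `m ⟶ n` are the
inert maps `[m] → [n]`. -/
structure InertCat where
  n : ℕ

instance : Category InertCat where
  Hom x y := {f : mk x.n ⟶ mk y.n // IsInert f}
  id x := ⟨𝟙 _, isInert_id _⟩
  comp f g := ⟨f.1 ≫ g.1, isInert_comp f.2 g.2⟩
  id_comp f := by apply Subtype.ext; simp
  comp_id f := by apply Subtype.ext; simp
  assoc f g h := by apply Subtype.ext; simp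

/-- The inclusion `j : Δ_inert → Δ`. -/
def jF : InertCat ⥤ SimplexCategory where
  obj x := mk x.n
  map f := f.1
  map_id _ := rfl
  map_comp _ _ := rfl

/-- The top vertex `[0] → [m]` as a morphism of `Δ_inert`. -/
def topV (m : ℕ) : (⟨0⟩ : InertCat) ⟶ ⟨m⟩ :=
  ⟨vtx m (Fin.last m), isInert_from_zero _⟩

/-- The bottom vertex `[0] → [m]` as a morphism of `Δ_inert`. -/
def botV (m : ℕ) : (⟨0⟩ : InertCat) ⟶ ⟨m⟩ :=
  ⟨vtx m 0, isInert_from_zero _⟩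

/-- The outer coface `d⊥ : [0] → [1]` (omitting `0`) as a morphism of `Δ_inert`. -/
def dBotI : (⟨0⟩ : InertCat) ⟶ ⟨1⟩ := ⟨δ (0 : Fin 2), isInert_from_zero _⟩

/-- The outer coface `d⊤ : [0] → [1]` (omitting the top) as a morphism of `Δ_inert`. -/
def dTopI : (⟨0⟩ : InertCat) ⟶ ⟨1⟩ := ⟨δ (1 : Fin 2), isInert_from_zero _⟩

/-- The category with objects `ℕ` and morphisms `m ⟶ n` the pairs `(a,b)`
with `a + m + b = n`, composed by componentwise addition. -/
structure NPairCat where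
  n : ℕ

instance : Category NPairCat where
  Hom x y := {p : ℕ × ℕ // p.1 + x.n + p.2 = y.n}
  id x := ⟨(0, 0), by omega⟩
  comp f g := ⟨(f.1.1 + g.1.1, f.1.2 + g.1.2), by have h1 := f.2; have h2 := g.2; omega⟩
  id_comp f := by apply Subtype.ext; obtain ⟨⟨a, b⟩, h⟩ := f; simp
  comp_id f := by apply Subtype.ext; obtain ⟨⟨a, b⟩, h⟩ := f; simp
  assoc f g h := by apply Subtype.ext; simp; omega

/-- The one-object category `Bℕ` with endomorphism monoid `(ℕ,+)`. -/
abbrev BN := SingleObj (Multiplicative ℕ)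

/-- The twisted arrow category of a category `C`: objects are arrows of `C`,
and a morphism from `f'` to `f` is a pair `(a, b)` with `f = a ≫ f' ≫ b`,
i.e. `f = b ∘ f' ∘ a`. -/
def Tw (C : Type u) [Category.{v} C] := Σ (x : C) (y : C), x ⟶ y

instance (C : Type u) [Category.{v} C] : Category (Tw C) where
  Hom f g := {p : (g.1 ⟶ f.1) × (f.2.1 ⟶ g.2.1) // g.2.2 = p.1 ≫ f.2.2 ≫ p.2}
  id f := ⟨(𝟙 _, 𝟙 _), by simp⟩
  comp u v := ⟨(v.1.1 ≫ u.1.1, u.1.2 ≫ v.1.2), by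
    have hu := u.2
    have hv := v.2
    simp only []
    simp only [hv, hu, Category.assoc]⟩
  id_comp u := by apply Subtype.ext; simp
  comp_id u := by apply Subtype.ext; simp
  assoc u v w := by apply Subtype.ext; simp

/-- Extract the pair of natural numbers underlying a morphism in `Tw Bℕ`. -/
def twBNPair {f g : Tw BN} (u : f ⟶ g) : ℕ × ℕ :=
  (Multiplicative.toAdd (show Multiplicative ℕ from u.1.1),
   Multiplicative.toAdd (show Multiplicative ℕ from u.1.2))

/-- Extract the natural number underlying an object of `Tw Bℕ`. -/
def twBNObj (f : Tw BN) : ℕ :=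
  Multiplicative.toAdd (show Multiplicative ℕ from f.2.2)

/-- The type of `k`-simplices of the free simplicial set on `A : Δ_inert^op → Set`:
the explicit formula `X_k = ∑_{α : [k] ↠ [n] active} A_n`. -/
def FD (A : InertCat ᵒᵖ ⥤ Type) (k : ℕ) : Type :=
  Σ n : ℕ, {α : mk k ⟶ mk n // IsActive α} × A.obj (Opposite.op ⟨n⟩)

/-- The action of an active map `g : [k'] → [k]` on the free simplicial set,
given by precomposition on the indexing active maps and the identity on summands. -/
def FDmap (A : InertCat ᵒᵖ ⥤ Type) {k' k : ℕ} (g : mk k' ⟶ mk k) (hg : IsActive g) :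
    FD A k → FD A k' :=
  fun x => ⟨x.1, ⟨g ≫ x.2.1.1, isActive_comp hg x.2.1.2⟩, x.2.2⟩

/-- The map of free simplicial sets induced by a natural transformation. -/
def FDmapNat {A' A : InertCat ᵒᵖ ⥤ Type} (η : A' ⟶ A) (k : ℕ) : FD A' k → FD A k :=
  fun x => ⟨x.1, x.2.1, η.app _ x.2.2⟩

/-- The tuple of successive differences of a map `α : [k] → [n]`. -/
def diff {k n : ℕ} (α : mk k ⟶ mk n) : Fin k → ℕ :=
  fun i => (α.toOrderHom i.succ : ℕ) - (α.toOrderHom i.castSucc : ℕ)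

/-- The set `Act(k)` of active maps out of `[k]` (with arbitrary codomain). -/
def ActFrom (k : ℕ) : Type :=
  Σ n : ℕ, {α : mk k ⟶ mk n // IsActive α}

/-- The difference map `Act(k) → ℕ^k`. -/
def diffMap (k : ℕ) : ActFrom k → (Fin k → ℕ) := fun x => diff x.2.1

/-- The action of `φ : [k'] → [k]` on the `k`-simplices `ℕ^k` of the nerve of
`Bℕ`: the `i`-th entry of the result is the sum of the entries from `φ(i-1)`
to `φ(i) - 1`. -/
def nerveBNAct {k' k : ℕ} (φ : mk k' ⟶ mk k) (x : Fin k → ℕ) : Fin k' → ℕ :=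
  fun i => ∑ j ∈ Finset.Ico ((φ.toOrderHom i.castSucc : ℕ)) ((φ.toOrderHom i.succ : ℕ)),
    (fun t => if h : t < k then x ⟨t, h⟩ else 0) j

/-- The inert map `γᵢ : [nᵢ] → [n]`, `j ↦ α(i) + j` (where `nᵢ = α(i+1) - α(i)`),
appearing in the active-inert factorization of `α ∘ ρᵢ`. -/
def segIncl {k n : ℕ} (α : mk k ⟶ mk n) (i : Fin k) : mk (diff α i) ⟶ mk n :=
  mkHom ⟨fun j => ⟨(α.toOrderHom i.castSucc : ℕ) + (j : ℕ), by
      have hj : (j : ℕ) ≤ diff α i := by have := j.isLt; simp [len_mk] at this; omega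
      have hle : (α.toOrderHom i.castSucc : ℕ) ≤ (α.toOrderHom i.succ : ℕ) :=
        α.toOrderHom.monotone (Fin.castSucc_le_succ i)
      have := (α.toOrderHom i.succ).isLt
      simp only [diff] at hj
      simp [len_mk] at *
      omega⟩,
    fun a b h => by
      simp only [Fin.mk_le_mk]
      have : (a : ℕ) ≤ (b : ℕ) := h
      omega⟩

lemma isInert_segIncl {k n : ℕ} (α : mk k ⟶ mk n) (i : Fin k) :
    IsInert (segIncl α i) := by
  intro t
  show ((α.toOrderHom i.castSucc : ℕ) + (t.succ : ℕ)) =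
    ((α.toOrderHom i.castSucc : ℕ) + (t.castSucc : ℕ)) + 1
  simp
  omega

/-- `γᵢ` as a morphism of `Δ_inert`. -/
def segInclI {k n : ℕ} (α : mk k ⟶ mk n) (i : Fin k) : (⟨diff α i⟩ : InertCat) ⟶ ⟨n⟩ :=
  ⟨segIncl α i, isInert_segIncl α i⟩

/-- The Segal map of the free simplicial set `X = j_!(A)`: it sends the
`α`-summand `A_n` of `X_k` to the tuple of its restrictions along the `γᵢ`. -/
def fdSegalMap (A : InertCat ᵒᵖ ⥤ Type) (k : ℕ) : FD A k → (Fin k → FD A 1) :=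
  fun x i => ⟨diff x.2.1.1 i, ⟨mu (diff x.2.1.1 i), isActive_mu _⟩,
    A.map (segInclI x.2.1.1 i).op x.2.2⟩

/-- Matching (fiber product over `X_0`) condition for a tuple in `(X_1)^k`:
consecutive components agree in `A_0` under top/bottom vertex restrictions. -/
def fdMatching (A : InertCat ᵒᵖ ⥤ Type) (k : ℕ) (t : Fin k → FD A 1) : Prop :=
  ∀ (i : Fin k) (h : (i : ℕ) + 1 < k),
    A.map (topV (t i).1).op ((t i).2.2) =
      A.map (botV (t ⟨(i : ℕ) + 1, h⟩).1).op ((t ⟨(i : ℕ) + 1, h⟩).2.2)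

/-- The restriction map `A_n → ∏ᵢ A_{nᵢ}` along the covering family `{γᵢ}`
associated to an active map `α : [k] → [n]`. -/
def resMap (A : InertCat ᵒᵖ ⥤ Type) {k n : ℕ} (α : mk k ⟶ mk n) :
    A.obj (Opposite.op ⟨n⟩) → ∀ i : Fin k, A.obj (Opposite.op ⟨diff α i⟩) :=
  fun a i => A.map (segInclI α i).op a

/-- Matching (fiber product over `A_0`) condition for a tuple in `∏ᵢ A_{nᵢ}`. -/
def resMatching (A : InertCat ᵒᵖ ⥤ Type) {k n : ℕ} (α : mk k ⟶ mk n)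
    (t : ∀ i : Fin k, A.obj (Opposite.op ⟨diff α i⟩)) : Prop :=
  ∀ (i : Fin k) (h : (i : ℕ) + 1 < k),
    A.map (topV (diff α i)).op (t i) =
      A.map (botV (diff α ⟨(i : ℕ) + 1, h⟩)).op (t ⟨(i : ℕ) + 1, h⟩)

/-- The length functor from the path category of a quiver to `Bℕ`. -/
def lengthFunctor (Q : Type u) [Quiver.{u + 1} Q] : Paths Q ⥤ BN where
  obj _ := SingleObj.star _
  map p := Multiplicative.ofAdd p.length
  map_id _ := rfl
  map_comp {x y z} p q := by
    show Multiplicative.ofAdd (p.comp q).length = _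
    show _ = (Multiplicative.ofAdd q.length) * (Multiplicative.ofAdd p.length)
    rw [← ofAdd_add]
    exact congrArg Multiplicative.ofAdd ((Quiver.Path.length_comp (V := Q) p q).trans (Nat.add_comm _ _))

/-- A functor to `Bℕ` is CULF if every factorization in `(ℕ,+)` of the image of
a morphism `f` lifts uniquely to a factorization of `f`. -/
def IsCULF {C : Type u} [Category.{v} C] (F : C ⥤ BN) : Prop :=
  ∀ {x y : C} (f : x ⟶ y) (a b : Multiplicative ℕ), F.map f = a * b →
    ∃! p : Σ z : C, (x ⟶ z) × (z ⟶ y),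
      p.2.1 ≫ p.2.2 = f ∧ F.map p.2.1 = a ∧ F.map p.2.2 = b

/-- The category `𝕃` of finite linear orders `{1,…,n}` and convex monotone
injections. -/
structure LinOrdCat where
  n : ℕ

/-- A convex monotone injection between finite linear orders. -/
def IsConvexEmb {m n : ℕ} (f : Fin m → Fin n) : Prop :=
  StrictMono f ∧ ∀ (a b : Fin m) (c : Fin n), f a ≤ c → c ≤ f b → ∃ x, f x = c

instance : Category LinOrdCat where
  Hom x y := {f : Fin x.n → Fin y.n // IsConvexEmb f}
  id x := ⟨id, strictMono_id, fun _ _ c _ _ => ⟨c, rfl⟩⟩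
  comp f g := ⟨g.1 ∘ f.1, (g.2.1).comp f.2.1, by
    intro a b c h1 h2
    obtain ⟨w, hw⟩ := g.2.2 (f.1 a) (f.1 b) c h1 h2
    have ha : f.1 a ≤ w := by
      rw [← (g.2.1).le_iff_le]; rw [hw]; exact h1
    have hb : w ≤ f.1 b := by
      rw [← (g.2.1).le_iff_le]; rw [hw]; exact h2
    obtain ⟨v, hv⟩ := f.2.2 a b w ha hb
    exact ⟨v, by simp [Function.comp, hv, hw]⟩⟩
  id_comp f := by apply Subtype.ext; rfl
  comp_id f := by apply Subtype.ext; rfl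
  assoc f g h := by apply Subtype.ext; rfl


/-! ### Auxiliary development for Statement 19 -/

section Aux

lemma inert_apply {m n : ℕ} {f : mk m ⟶ mk n} (hf : IsInert f) :
    ∀ i : Fin (m + 1), (f.toOrderHom i : ℕ) = (f.toOrderHom 0 : ℕ) + (i : ℕ) := by
  intro i
  induction i using Fin.induction with
  | zero => simp
  | succ i ih =>
    have := hf i
    rw [this, ih]
    simp [Fin.val_succ]
    omega

lemma inert_ext {m n : ℕ} {f g : mk m ⟶ mk n} (hf : IsInert f) (hg : IsInert g)
    (h : (f.toOrderHom 0 : ℕ) = (g.toOrderHom 0 : ℕ)) : f = g := by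
  apply SimplexCategory.Hom.ext
  ext i
  rw [inert_apply hf i, inert_apply hg i, h]

lemma inert_le {m n : ℕ} {f : mk m ⟶ mk n} (hf : IsInert f) :
    (f.toOrderHom 0 : ℕ) + m ≤ n := by
  have h := inert_apply hf (Fin.last m)
  have h2 : (f.toOrderHom (Fin.last m) : ℕ) < n + 1 := by
    have := (f.toOrderHom (Fin.last m)).isLt
    simpa [len_mk] using this
  simp [Fin.last] at h
  omega

lemma convex_apply {m n : ℕ} {f : Fin m → Fin n} (hf : IsConvexEmb f) (h0 : 0 < m) :
    ∀ j : Fin m, (f j : ℕ) = (f ⟨0, h0⟩ : ℕ) + (j : ℕ) := by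
  intro ⟨jv, hj⟩
  induction jv with
  | zero => simp
  | succ k ih =>
    have hk : k < m := by omega
    have ihk : (f ⟨k, hk⟩ : ℕ) = (f ⟨0, h0⟩ : ℕ) + k := by simpa using ih hk
    have hlt : f ⟨k, hk⟩ < f ⟨k + 1, hj⟩ := hf.1 (by simp [Fin.lt_def])
    rw [Fin.lt_def] at hlt
    have hcb : (f ⟨0, h0⟩ : ℕ) + (k + 1) < n := by
      have := (f ⟨k + 1, hj⟩).isLt
      omega
    obtain ⟨x, hx⟩ := hf.2 ⟨k, hk⟩ ⟨k + 1, hj⟩ ⟨(f ⟨0, h0⟩ : ℕ) + (k + 1), hcb⟩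
      (by rw [Fin.le_def]; simp; omega) (by rw [Fin.le_def]; simp; omega)
    have h1 : (⟨k, hk⟩ : Fin m) < x := by
      rw [← hf.1.lt_iff_lt, hx, Fin.lt_def]; simp; omega
    have h2 : x ≤ (⟨k + 1, hj⟩ : Fin m) := by
      rw [← hf.1.le_iff_le, hx, Fin.le_def]
      have h3 : (f ⟨k + 1, hj⟩ : ℕ) ≥ (f ⟨0, h0⟩ : ℕ) + (k + 1) := by omega
      simp
      omega
    have hxe : x = ⟨k + 1, hj⟩ := by
      rw [Fin.lt_def] at h1
      rw [Fin.le_def] at h2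
      apply Fin.ext
      simp at h1 h2 ⊢
      omega
    rw [hxe] at hx
    rw [hx]

/-- The underlying function of the image under the edge functor. -/
def PFfun {x y : InertCat} (u : x ⟶ y) (j : Fin x.n) : Fin y.n :=
  ⟨(u.1.toOrderHom 0 : ℕ) + (j : ℕ), by
    have h1 : (u.1.toOrderHom 0 : ℕ) + x.n ≤ y.n := inert_le u.2
    have h2 : (j : ℕ) < x.n := j.isLt
    omega⟩

lemma isConvexEmb_PFfun {x y : InertCat} (u : x ⟶ y) : IsConvexEmb (PFfun u) := by
  constructor
  · intro a b h
    rw [Fin.lt_def] at h ⊢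
    show (u.1.toOrderHom 0 : ℕ) + (a : ℕ) < (u.1.toOrderHom 0 : ℕ) + (b : ℕ)
    omega
  · intro a b c h1 h2
    rw [Fin.le_def] at h1 h2
    have ha : (u.1.toOrderHom 0 : ℕ) + (a : ℕ) ≤ (c : ℕ) := h1
    have hb : (c : ℕ) ≤ (u.1.toOrderHom 0 : ℕ) + (b : ℕ) := h2
    refine ⟨⟨(c : ℕ) - (u.1.toOrderHom 0 : ℕ), by have := b.isLt; omega⟩, ?_⟩
    apply Fin.ext
    show (u.1.toOrderHom 0 : ℕ) + ((c : ℕ) - (u.1.toOrderHom 0 : ℕ)) = (c : ℕ)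
    omega

/-- The edge functor `Δ_inert ⥤ 𝕃`. -/
def PF : InertCat ⥤ LinOrdCat where
  obj x := ⟨x.n⟩
  map u := ⟨PFfun u, isConvexEmb_PFfun u⟩
  map_id x := by
    apply Subtype.ext
    funext j
    apply Fin.ext
    show (Hom.toOrderHom (𝟙 (mk x.n)) 0 : ℕ) + (j : ℕ) = (j : ℕ)
    exact Nat.zero_add _
  map_comp {x y z} u v := by
    apply Subtype.ext
    funext j
    apply Fin.ext
    show (Hom.toOrderHom (u.1 ≫ v.1) 0 : ℕ) + (j : ℕ) = _
    show (v.1.toOrderHom (u.1.toOrderHom 0) : ℕ) + (j : ℕ) =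
      (v.1.toOrderHom 0 : ℕ) + ((u.1.toOrderHom 0 : ℕ) + (j : ℕ))
    rw [inert_apply v.2 (u.1.toOrderHom 0)]
    omega

/-- The offset of a convex embedding. -/
def offL {x y : LinOrdCat} (f : x ⟶ y) : ℕ :=
  if h : 0 < x.n then (f.1 ⟨0, h⟩ : ℕ) else 0

lemma offL_add_le {x y : LinOrdCat} (f : x ⟶ y) : offL f + x.n ≤ y.n := by
  unfold offL
  by_cases h : 0 < x.n
  · rw [dif_pos h]
    have h1 := convex_apply f.2 h ⟨x.n - 1, by omega⟩
    have h2 := (f.1 ⟨x.n - 1, by omega⟩).isLt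
    simp at h1
    omega
  · rw [dif_neg h]
    omega

/-- The inert lift of a convex embedding. -/
def liftHom {x y : LinOrdCat} (f : x ⟶ y) : (⟨x.n⟩ : InertCat) ⟶ (⟨y.n⟩ : InertCat) :=
  ⟨mkHom ⟨fun i => ⟨offL f + (i : ℕ), by
      have h1 := offL_add_le f
      have h2 : (i : ℕ) < x.n + 1 := by have := i.isLt; simpa [len_mk] using this
      simp [len_mk]
      omega⟩, fun a b h => by
    rw [Fin.le_def] at h ⊢
    simp
    omega⟩, by
    intro i
    show offL f + ((i.succ : Fin (x.n + 1)) : ℕ) = offL f + ((i.castSucc : Fin (x.n + 1)) : ℕ) + 1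
    simp
    omega⟩

lemma liftHom_zero {x y : LinOrdCat} (f : x ⟶ y) :
    ((liftHom f).1.toOrderHom 0 : ℕ) = offL f := by
  show offL f + ((0 : Fin (x.n + 1)) : ℕ) = offL f
  simp

lemma PF_liftHom {x y : LinOrdCat} (f : x ⟶ y) : PF.map (liftHom f) = f := by
  apply Subtype.ext
  funext j
  apply Fin.ext
  show ((liftHom f).1.toOrderHom 0 : ℕ) + (j : ℕ) = (f.1 j : ℕ)
  rw [liftHom_zero]
  have h0 : 0 < x.n := j.pos
  rw [convex_apply f.2 h0 j]
  unfold offL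
  rw [dif_pos h0]

lemma liftHom_id (x : LinOrdCat) : liftHom (𝟙 x) = 𝟙 (⟨x.n⟩ : InertCat) := by
  apply Subtype.ext
  apply inert_ext (liftHom (𝟙 x)).2 (isInert_id _)
  rw [liftHom_zero]
  show _ = ((0 : Fin (x.n + 1)) : ℕ)
  unfold offL
  by_cases h : 0 < x.n
  · rw [dif_pos h]; rfl
  · rw [dif_neg h]; rfl

/-- The condition of Statement 19. -/
abbrev Cond : (InertCat ᵒᵖ ⥤ Type) → Prop :=
  fun A => A.map dBotI.op = A.map dTopI.op

lemma hom0_ext {n : ℕ} {f g : mk 0 ⟶ mk n}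
    (h : f.toOrderHom 0 = g.toOrderHom 0) : f = g := by
  apply SimplexCategory.Hom.ext
  apply OrderHom.ext
  funext i
  have hi : i = 0 := Subsingleton.elim (α := Fin 1) i 0
  calc f.toOrderHom i = f.toOrderHom 0 := congrArg (fun t : Fin 1 => f.toOrderHom t) hi
    _ = g.toOrderHom 0 := h
    _ = g.toOrderHom i := (congrArg (fun t : Fin 1 => g.toOrderHom t) hi).symm

/-- The vertex `[0] → [n]` in `Δ_inert`. -/
def vtxI (n : ℕ) (j : Fin (n + 1)) : (⟨0⟩ : InertCat) ⟶ ⟨n⟩ :=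
  ⟨vtx n j, isInert_from_zero _⟩

lemma hom0_eq_vtx {y : InertCat} (u : (⟨0⟩ : InertCat) ⟶ y) :
    u = vtxI y.n (u.1.toOrderHom 0) := by
  apply Subtype.ext
  exact hom0_ext rfl

lemma isInert_rho (k : ℕ) (i : Fin k) : IsInert (rho k i) := by
  intro t
  show (i : ℕ) + ((t.succ : Fin 2) : ℕ) = (i : ℕ) + ((t.castSucc : Fin 2) : ℕ) + 1
  simp

/-- The key collapsing lemma: on a presheaf satisfying `Cond`, all maps out of
`[0]` act equally. -/
lemma collapse {A : InertCat ᵒᵖ ⥤ Type} (hA : Cond A) :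
    ∀ {x y : InertCat} (_ : x.n = 0) (u v : x ⟶ y), A.map u.op = A.map v.op := by
  have key : ∀ (n : ℕ) (j : Fin (n + 1)),
      A.map (vtxI n j).op = A.map (vtxI n ⟨0, Nat.succ_pos n⟩).op := by
    intro n ⟨jv, hj⟩
    induction jv with
    | zero => rfl
    | succ k ih =>
      have hk : k < n := by omega
      let rhoI : (⟨1⟩ : InertCat) ⟶ ⟨n⟩ := ⟨rho n ⟨k, hk⟩, isInert_rho n ⟨k, hk⟩⟩
      have hBot : vtxI n ⟨k + 1, hj⟩ = dBotI ≫ rhoI := by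
        apply Subtype.ext
        apply hom0_ext
        apply Fin.ext
        show k + 1 = k + (((0 : Fin 2).succAbove 0 : Fin 2) : ℕ)
        rfl
      have hTop : vtxI n ⟨k, by omega⟩ = dTopI ≫ rhoI := by
        apply Subtype.ext
        apply hom0_ext
        apply Fin.ext
        show k = k + (((1 : Fin 2).succAbove 0 : Fin 2) : ℕ)
        rfl
      calc A.map (vtxI n ⟨k + 1, hj⟩).op
          = A.map (dBotI ≫ rhoI).op := by rw [hBot]
        _ = A.map rhoI.op ≫ A.map dBotI.op := by rw [op_comp, A.map_comp]
        _ = A.map rhoI.op ≫ A.map dTopI.op := by rw [hA]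
        _ = A.map (dTopI ≫ rhoI).op := by rw [op_comp, A.map_comp]
        _ = A.map (vtxI n ⟨k, by omega⟩).op := by rw [hTop]
        _ = _ := ih (by omega)
  intro x y hx u v
  obtain ⟨xn⟩ := x
  obtain ⟨yn⟩ := y
  simp only at hx
  subst hx
  rw [hom0_eq_vtx u, hom0_eq_vtx v]
  exact (key yn _).trans (key yn _).symm

lemma map_liftP {A : InertCat ᵒᵖ ⥤ Type} (hA : Cond A) {x y : InertCat} (u : x ⟶ y) :
    A.map (liftHom (PF.map u)).op = A.map u.op := by
  obtain ⟨xn⟩ := x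
  obtain ⟨yn⟩ := y
  match xn with
  | 0 => exact collapse hA rfl _ _
  | Nat.succ m =>
    congr 2
    apply Subtype.ext
    apply inert_ext (liftHom (PF.map u)).2 u.2
    rw [liftHom_zero]
    unfold offL
    rw [dif_pos (show 0 < (PF.obj ⟨Nat.succ m⟩).n from Nat.succ_pos m)]
    rfl

lemma map_lift_comp {A : InertCat ᵒᵖ ⥤ Type} (hA : Cond A) {x y z : LinOrdCat}
    (f : x ⟶ y) (g : y ⟶ z) :
    A.map (liftHom (f ≫ g)).op = A.map (liftHom g).op ≫ A.map (liftHom f).op := by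
  rw [← A.map_comp, ← op_comp]
  obtain ⟨xn⟩ := x
  match xn with
  | 0 => exact collapse hA rfl _ _
  | Nat.succ m =>
    congr 2
    apply Subtype.ext
    apply inert_ext (liftHom (f ≫ g)).2 (isInert_comp (liftHom f).2 (liftHom g).2)
    rw [liftHom_zero]
    show _ = ((liftHom g).1.toOrderHom ((liftHom f).1.toOrderHom 0) : ℕ)
    rw [inert_apply (liftHom g).2, liftHom_zero, liftHom_zero]
    have h0 : 0 < (⟨Nat.succ m⟩ : LinOrdCat).n := Nat.succ_pos m
    unfold offL
    rw [dif_pos h0, dif_pos h0]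
    have hy : 0 < y.n := (f.1 ⟨0, h0⟩).pos
    rw [dif_pos hy]
    show ((g.1 (f.1 ⟨0, h0⟩)) : ℕ) = _
    rw [convex_apply g.2 hy (f.1 ⟨0, h0⟩)]

/-- The functor from presheaves satisfying the condition to `𝕃`-presheaves. -/
def toL : ObjectProperty.FullSubcategory Cond ⥤ (LinOrdCat ᵒᵖ ⥤ Type) where
  obj X :=
    { obj := fun o => X.obj.obj (Opposite.op ⟨o.unop.n⟩)
      map := fun f => X.obj.map (liftHom f.unop).op
      map_id := fun o => by
        show X.obj.map (liftHom (𝟙 o.unop)).op = _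
        rw [liftHom_id]
        exact X.obj.map_id _
      map_comp := fun {o p q} f g => map_lift_comp X.property g.unop f.unop }
  map η :=
    { app := fun o => η.hom.app (Opposite.op ⟨o.unop.n⟩)
      naturality := fun o p f => η.hom.naturality _ }
  map_id X := rfl
  map_comp f g := rfl

/-- The functor from `𝕃`-presheaves to presheaves satisfying the condition. -/
def fromL : (LinOrdCat ᵒᵖ ⥤ Type) ⥤ ObjectProperty.FullSubcategory Cond where
  obj B := ⟨PF.op ⋙ B, by
    show B.map (PF.map dBotI).op = B.map (PF.map dTopI).op
    congr 2
    apply Subtype.ext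
    funext j
    exact j.elim0⟩
  map η := ObjectProperty.homMk (CategoryTheory.Functor.whiskerLeft PF.op η)
  map_id B := rfl
  map_comp f g := rfl

/-- The unit component. -/
def unitHom (X : ObjectProperty.FullSubcategory Cond) : X.obj ⟶ PF.op ⋙ toL.obj X where
  app o := 𝟙 (X.obj.obj o)
  naturality o p f := by
    show X.obj.map f ≫ 𝟙 _ = 𝟙 _ ≫ X.obj.map (liftHom (PF.map f.unop)).op
    rw [Category.comp_id, Category.id_comp, map_liftP X.property, Quiver.Hom.op_unop]

/-- The inverse unit component. -/
def unitInv (X : ObjectProperty.FullSubcategory Cond) : PF.op ⋙ toL.obj X ⟶ X.obj where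
  app o := 𝟙 (X.obj.obj o)
  naturality o p f := by
    show X.obj.map (liftHom (PF.map f.unop)).op ≫ 𝟙 _ = 𝟙 _ ≫ X.obj.map f
    rw [Category.comp_id, Category.id_comp, map_liftP X.property, Quiver.Hom.op_unop]

/-- The unit component iso. -/
def unitIsoApp (X : ObjectProperty.FullSubcategory Cond) : X ≅ (toL ⋙ fromL).obj X where
  hom := ObjectProperty.homMk (unitHom X)
  inv := ObjectProperty.homMk (unitInv X)
  hom_inv_id := rfl
  inv_hom_id := rfl

/-- The counit component iso. -/
def counitIsoApp (B : LinOrdCat ᵒᵖ ⥤ Type) : (fromL ⋙ toL).obj B ≅ B :=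
  NatIso.ofComponents (fun o => Iso.refl _) (fun {o p} f => by
    show (PF.op ⋙ B).map (liftHom f.unop).op ≫ 𝟙 _ = 𝟙 _ ≫ B.map f
    rw [Category.comp_id, Category.id_comp]
    show B.map (PF.map (liftHom f.unop)).op = B.map f
    rw [PF_liftHom]; rfl)

/-- The equivalence of Statement 19. -/
def mainEquiv : ObjectProperty.FullSubcategory Cond ≌ (LinOrdCat ᵒᵖ ⥤ Type) :=
  CategoryTheory.Equivalence.mk toL fromL
    (NatIso.ofComponents unitIsoApp (fun {X Y} η => rfl))
    (NatIso.ofComponents counitIsoApp (fun {B C} η => rfl))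

end Aux

/-- Presheaves on `Δ_inert` whose two face maps `A_1 → A_0`
coincide are the same thing as restriction `𝕃`-species, i.e. presheaves on the
category `𝕃` of finite linear orders and convex monotone injections. -/
theorem restriction_L_species_equiv :
    Nonempty
      (ObjectProperty.FullSubcategory
        (fun A : InertCat ᵒᵖ ⥤ Type => A.map dBotI.op = A.map dTopI.op) ≌
        (LinOrdCat ᵒᵖ ⥤ Type)) := by
  exact ⟨mainEquiv⟩

end FreeDecompPaper
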